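/- arXiv:2307.07206 — 2 statements merged into one kernel-verified Lean document; each statement's English description precedes it below -/
import Mathlib

section
/- Let z be a nonzero complex number with arg z = φ ∈ [π − θ, θ] for some θ ∈ (π/2, π). Then for all nonnegative reals γ, β one has 2·|zγ + β| ≥ (|z|·γ + β)·sin θ. -/
theorem stmt2 (θ : ℝ) (hθ : θ ∈ Set.Ioo (Real.pi / 2) Real.pi)
    (z : ℂ) (hz : z ≠ 0) (φ : ℝ) (hφ : z.arg = φ)
    (hφ2 : φ ∈ Set.Icc (Real.pi - θ) θ) (γ β : ℝ) (hγ : 0 ≤ γ) (hβ : 0 ≤ β) :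
    (‖z‖ * γ + β) * Real.sin θ ≤ 2 * ‖z * (γ : ℂ) + (β : ℂ)‖ := by
  obtain ⟨hθ1, hθ2⟩ := hθ
  obtain ⟨hφl, hφr⟩ := hφ2
  have hpi := Real.pi_pos
  have hsθ : 0 < Real.sin θ := Real.sin_pos_of_pos_of_lt_pi (by linarith) hθ2
  -- sin φ ≥ sin θ
  have hsin : Real.sin θ ≤ Real.sin φ := by
    rcases le_or_gt φ (Real.pi / 2) with h | h
    · rw [show Real.sin θ = Real.sin (Real.pi - θ) by rw [Real.sin_pi_sub]]
      exact Real.sin_le_sin_of_le_of_le_pi_div_two (by linarith) h hφl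
    · rw [← Real.sin_pi_sub φ, show Real.sin θ = Real.sin (Real.pi - θ) by
        rw [Real.sin_pi_sub]]
      exact Real.sin_le_sin_of_le_of_le_pi_div_two (by linarith) (by linarith)
        (by linarith)
  have hre : z.re = ‖z‖ * Real.cos φ := by
    rw [← hφ, Complex.cos_arg hz]; field_simp [(norm_ne_zero_iff.mpr hz)]
  have him : z.im = ‖z‖ * Real.sin φ := by
    rw [← hφ, Complex.sin_arg]; field_simp [(norm_ne_zero_iff.mpr hz)]
  set w : ℂ := z * (γ : ℂ) + (β : ℂ) with hw
  have hwre : w.re = ‖z‖ * Real.cos φ * γ + β := by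
    simp [hw, ← hre]
  have hwim : w.im = ‖z‖ * Real.sin φ * γ := by
    simp [hw, ← him]
  have habs : 0 ≤ ‖z‖ := norm_nonneg z
  -- |w| ≥ Im w = |z| sin φ γ ≥ |z| sin θ γ
  have h1 : ‖z‖ * Real.sin θ * γ ≤ ‖w‖ := by
    have := Complex.im_le_norm w
    rw [hwim] at this
    nlinarith [mul_nonneg (mul_nonneg habs hγ) (sub_nonneg.2 hsin)]
  -- |w| ≥ β sin φ ≥ β sin θ
  have h2 : β * Real.sin θ ≤ ‖w‖ := by
    have hsq : (β * Real.sin φ) ^ 2 ≤ ‖w‖ ^ 2 := by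
      rw [Complex.sq_norm, Complex.normSq_apply, hwre, hwim]
      have hc : Real.cos φ ^ 2 + Real.sin φ ^ 2 = 1 := by
        rw [add_comm]; exact Real.sin_sq_add_cos_sq φ
      have key : (‖z‖ * Real.cos φ * γ + β) ^ 2 +
          (‖z‖ * Real.sin φ * γ) ^ 2 - (β * Real.sin φ) ^ 2 =
          (β * Real.cos φ + ‖z‖ * γ) ^ 2 := by
        linear_combination (‖z‖ ^ 2 * γ ^ 2 - β ^ 2) * hc
      nlinarith [sq_nonneg (β * Real.cos φ + ‖z‖ * γ), key]
    have hb : β * Real.sin φ ≤ ‖w‖ := by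
      nlinarith [norm_nonneg w]
    nlinarith
  nlinarith
end

section
/- Let λ > 0, α ∈ (0,1), and m ≥ 0 an integer. For t > 0, consider the scalar function F^r_λ(t) = (−1)^m/(2πi)·∮ e^{zt}·z^{(1+m)α−1}·(z^α + λ)^{−1}·λ^{−m} dz over a sectorial contour Γ_{θ,κ} with κ = 1/t and θ ∈ (π/2, π/α ∧ π). Then |λ^{m+1}·F^r_λ(t)| ≤ c·t^{−(m+1)α}, with c independent of λ and t. -/
open MeasureTheory

section Helpers
open Complex Real Set

lemma polar_arg (ρ φ : ℝ) (hρ : 0 < ρ) (hφ : φ ∈ Set.Ioc (-Real.pi) Real.pi) :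
    Complex.arg ((ρ:ℂ) * Complex.exp (Complex.I * φ)) = φ := by
  rw [mul_comm Complex.I, Complex.exp_mul_I]
  exact Complex.arg_mul_cos_add_sin_mul_I hρ hφ

lemma polar_abs (ρ φ : ℝ) (hρ : 0 ≤ ρ) :
    ‖(ρ:ℂ) * Complex.exp (Complex.I * φ)‖ = ρ := by
  simp [Complex.norm_exp, _root_.abs_of_nonneg hρ]

lemma cpow_polar (ρ φ s : ℝ) (hρ : 0 < ρ) (hφ : φ ∈ Set.Ioc (-Real.pi) Real.pi) :
    ((ρ:ℂ) * Complex.exp (Complex.I * φ)) ^ ((s:ℝ):ℂ)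
      = ((ρ ^ s : ℝ) : ℂ) * Complex.exp (Complex.I * ((s*φ : ℝ):ℂ)) := by
  have hz : ((ρ:ℂ) * Complex.exp (Complex.I * φ)) ≠ 0 := by
    simp [Complex.exp_ne_zero, hρ.ne']
  rw [Complex.cpow_def_of_ne_zero hz, Complex.log, polar_arg ρ φ hρ hφ,
    polar_abs ρ φ hρ.le]
  rw [Real.rpow_def_of_pos hρ, Complex.ofReal_exp, ← Complex.exp_add]
  congr 1
  push_cast
  ring

lemma sector_lb (α θ ρ φ lam : ℝ) (hα0 : 0 < α) (hθ0 : 0 < θ) (hαθ : α * θ < Real.pi)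
    (hρ : 0 < ρ) (hφ : |φ| ≤ θ) (hφπ : φ ∈ Set.Ioc (-Real.pi) Real.pi) (hl : 0 < lam) :
    lam * Real.sin (α * θ) ≤
      ‖((ρ:ℂ) * Complex.exp (Complex.I * φ)) ^ ((α:ℝ):ℂ) + lam‖ := by
  rw [cpow_polar ρ φ α hρ hφπ]
  set r : ℝ := ρ ^ α with hr
  have hr0 : 0 < r := Real.rpow_pos_of_pos hρ α
  have hsq : (‖((r:ℝ):ℂ) * Complex.exp (Complex.I * ((α*φ : ℝ):ℂ)) + (lam:ℂ)‖)^2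
      = r^2 + 2*lam*r*Real.cos (α*φ) + lam^2 := by
    rw [Complex.sq_norm, mul_comm Complex.I, Complex.exp_mul_I]
    simp [Complex.normSq_apply, ← Complex.ofReal_mul, Complex.cos_ofReal_re,
      Complex.sin_ofReal_re, Complex.cos_ofReal_im, Complex.sin_ofReal_im]
    nlinarith [Real.sin_sq_add_cos_sq (α*φ)]
  have hcos : Real.cos (α*θ) ≤ Real.cos (α*φ) := by
    rw [← Real.cos_abs (α*φ)]
    apply Real.cos_le_cos_of_nonneg_of_le_pi (abs_nonneg _) hαθ.le
    rw [abs_mul, _root_.abs_of_nonneg hα0.le]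
    exact mul_le_mul_of_nonneg_left hφ hα0.le
  have hsin0 : 0 ≤ Real.sin (α*θ) :=
    (Real.sin_pos_of_pos_of_lt_pi (by positivity) hαθ).le
  have h1 : (lam * Real.sin (α*θ))^2 ≤ r^2 + 2*lam*r*Real.cos (α*φ) + lam^2 := by
    nlinarith [Real.sin_sq_add_cos_sq (α*θ), sq_nonneg (r + lam*Real.cos (α*θ)),
      mul_nonneg (mul_nonneg hl.le hr0.le) (sub_nonneg.mpr hcos)]
  rw [← hsq] at h1
  exact (pow_le_pow_iff_left₀ (by positivity) (norm_nonneg _) two_ne_zero).mp h1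

lemma ray_integrable (β a κ : ℝ) (hβ : 0 < β) (ha : 0 < a) (hκ : 0 < κ) :
    MeasureTheory.IntegrableOn (fun ρ => Real.exp (-(a*ρ)) * ρ^(β-1)) (Set.Ioi κ) := by
  have h1 : MeasureTheory.IntegrableOn (fun x => Real.exp (-x) * x^(β-1)) (Set.Ioi (a*κ)) :=
    (Real.GammaIntegral_convergent hβ).mono_set
      (Set.Ioi_subset_Ioi (by positivity))
  have h2 : MeasureTheory.IntegrableOn
      (fun ρ => Real.exp (-(a*ρ)) * (a*ρ)^(β-1)) (Set.Ioi κ) :=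
    (MeasureTheory.integrableOn_Ioi_comp_mul_left_iff (fun x => Real.exp (-x) * x^(β-1)) κ ha).mpr h1
  have h3 := h2.const_mul (a^(β-1))⁻¹
  apply (MeasureTheory.IntegrableOn.congr_fun h3 ?_ measurableSet_Ioi)
  intro x hx
  dsimp only
  have hx0 : 0 < x := hκ.trans hx
  rw [Real.mul_rpow ha.le hx0.le]
  field_simp

lemma ray_int_le (β a κ : ℝ) (hβ : 0 < β) (ha : 0 < a) (hκ : 0 < κ) :
    ∫ ρ in Set.Ioi κ, Real.exp (-(a*ρ)) * ρ^(β-1) ≤ a^(-β) * Real.Gamma β := by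
  have key : ∫ ρ in Set.Ioi κ, Real.exp (-(a*ρ)) * ρ^(β-1)
      = (a^(β-1))⁻¹ * ∫ ρ in Set.Ioi κ, Real.exp (-(a*ρ)) * (a*ρ)^(β-1) := by
    rw [← MeasureTheory.integral_const_mul]
    apply MeasureTheory.setIntegral_congr_fun measurableSet_Ioi
    intro x hx
    have hx0 : 0 < x := hκ.trans hx
    dsimp only
    rw [Real.mul_rpow ha.le hx0.le]
    field_simp
  rw [key, MeasureTheory.integral_comp_mul_left_Ioi (fun x => Real.exp (-x) * x^(β-1)) κ ha]
  have hmono : ∫ x in Set.Ioi (a*κ), Real.exp (-x) * x^(β-1)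
      ≤ ∫ x in Set.Ioi 0, Real.exp (-x) * x^(β-1) := by
    apply MeasureTheory.setIntegral_mono_set (Real.GammaIntegral_convergent hβ)
    · filter_upwards [MeasureTheory.ae_restrict_mem measurableSet_Ioi] with x hx
      exact mul_nonneg (Real.exp_nonneg _) (Real.rpow_nonneg (le_of_lt hx) _)
    · exact MeasureTheory.ae_of_all _ (Set.Ioi_subset_Ioi (by positivity))
  rw [← Real.Gamma_eq_integral hβ] at hmono
  rw [smul_eq_mul, ← mul_assoc]
  have : (a^(β-1))⁻¹ * a⁻¹ = a^(-β) := by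
    rw [← Real.rpow_neg_one a, ← Real.rpow_neg ha.le, ← Real.rpow_add ha]
    ring_nf
  rw [this]
  have : (0:ℝ) ≤ a^(-β) := (Real.rpow_pos_of_pos ha _).le
  exact mul_le_mul_of_nonneg_left hmono this

lemma polar_re (ρ φ : ℝ) :
    ((ρ:ℂ) * Complex.exp (Complex.I * φ)).re = ρ * Real.cos φ := by
  rw [mul_comm Complex.I, Complex.exp_mul_I]
  simp [Complex.cos_ofReal_re, Complex.sin_ofReal_im]

lemma point_bound (α θ : ℝ) (m : ℕ) (hα0 : 0 < α) (hθ0 : 0 < θ) (hαθ : α*θ < Real.pi)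
    (lam t ρ φ : ℝ) (hl : 0 < lam) (ht : 0 < t) (hρ : 0 < ρ)
    (hφ : |φ| ≤ θ) (hφπ : φ ∈ Set.Ioc (-Real.pi) Real.pi) :
    ‖(lam:ℂ)^(m+1) *
      (Complex.exp (((ρ:ℂ) * Complex.exp (Complex.I * (φ:ℂ))) * (t:ℂ)) *
        ((ρ:ℂ) * Complex.exp (Complex.I * (φ:ℂ))) ^ ((((1 + (m : ℝ)) * α - 1 : ℝ)) : ℂ) *
        (((ρ:ℂ) * Complex.exp (Complex.I * (φ:ℂ))) ^ ((α : ℝ) : ℂ) + (lam : ℂ))⁻¹ *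
        (lam : ℂ) ^ (-(m : ℤ)))‖
    ≤ (Real.sin (α*θ))⁻¹ * (Real.exp (ρ * Real.cos φ * t) * ρ^((1 + (m:ℝ))*α - 1)) := by
  have hS : 0 < Real.sin (α*θ) :=
    Real.sin_pos_of_pos_of_lt_pi (by positivity) hαθ
  set z : ℂ := (ρ:ℂ) * Complex.exp (Complex.I * (φ:ℂ)) with hz
  set β1 : ℝ := (1 + (m:ℝ))*α - 1 with hβ1
  have habs_lam : ‖(lam:ℂ)^(m+1)‖ = lam^(m+1) := by
    rw [norm_pow, Complex.norm_real, Real.norm_eq_abs, _root_.abs_of_pos hl]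
  have habs_exp : ‖Complex.exp (z * (t:ℂ))‖ = Real.exp (ρ * Real.cos φ * t) := by
    rw [Complex.norm_exp]
    congr 1
    rw [Complex.mul_re, Complex.ofReal_re, Complex.ofReal_im, mul_zero, sub_zero, polar_re]
  have habs_pow : ‖z ^ ((β1:ℝ):ℂ)‖ = ρ^β1 := by
    rw [hz, cpow_polar ρ φ β1 hρ hφπ, norm_mul]
    simp [Complex.norm_exp, Complex.norm_real, _root_.abs_of_nonneg (Real.rpow_nonneg hρ.le β1)]
  have habs_zpow : ‖(lam:ℂ)^(-(m:ℤ))‖ = (lam^m)⁻¹ := by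
    rw [norm_zpow, Complex.norm_real, Real.norm_eq_abs, _root_.abs_of_pos hl, zpow_neg, zpow_natCast]
  have habs_inv : ‖(z ^ ((α:ℝ):ℂ) + (lam:ℂ))⁻¹‖ ≤ (lam * Real.sin (α*θ))⁻¹ := by
    rw [norm_inv]
    exact inv_anti₀ (mul_pos hl hS) (sector_lb α θ ρ φ lam hα0 hθ0 hαθ hρ hφ hφπ hl)
  rw [norm_mul, norm_mul, norm_mul, norm_mul, habs_lam, habs_exp, habs_pow, habs_zpow]
  set E := Real.exp (ρ * Real.cos φ * t)
  set P := ρ^β1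
  set Q := ‖(z ^ ((α:ℝ):ℂ) + (lam:ℂ))⁻¹‖
  have hE : 0 ≤ E := Real.exp_nonneg _
  have hP : 0 ≤ P := Real.rpow_nonneg hρ.le _
  have hlamQ : lam * Q ≤ (Real.sin (α*θ))⁻¹ := by
    calc lam * Q ≤ lam * (lam * Real.sin (α*θ))⁻¹ :=
          mul_le_mul_of_nonneg_left habs_inv hl.le
      _ = (Real.sin (α*θ))⁻¹ := by field_simp
  calc lam^(m+1) * (E * P * Q * (lam^m)⁻¹)
      = (E * P) * (lam * Q) * (lam^m * (lam^m)⁻¹) := by rw [pow_succ]; ring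
    _ = (E * P) * (lam * Q) := by
        rw [mul_inv_cancel₀ (pow_ne_zero _ hl.ne'), mul_one]
    _ ≤ (E * P) * (Real.sin (α*θ))⁻¹ :=
        mul_le_mul_of_nonneg_left hlamQ (mul_nonneg hE hP)
    _ = (Real.sin (α*θ))⁻¹ * (E * P) := by ring

end Helpers

theorem stmt14 (α : ℝ) (hα : α ∈ Set.Ioo (0:ℝ) 1) (m : ℕ) (θ : ℝ)
    (hθ : θ ∈ Set.Ioo (Real.pi / 2) (min Real.pi (Real.pi / α))) :
    ∃ c : ℝ, 0 < c ∧ ∀ lam t : ℝ, 0 < lam → 0 < t →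
      let κ : ℝ := 1 / t
      let f : ℂ → ℂ := fun z =>
        Complex.exp (z * (t : ℂ)) * z ^ ((((1 + (m : ℝ)) * α - 1 : ℝ)) : ℂ) *
          (z ^ ((α : ℝ) : ℂ) + (lam : ℂ))⁻¹ * (lam : ℂ) ^ (-(m : ℤ))
      let F : ℂ := (-1 : ℂ) ^ m / (2 * (Real.pi : ℂ) * Complex.I) *
        (-(∫ ρ in Set.Ioi κ, f ((ρ : ℂ) * Complex.exp (-Complex.I * (θ : ℂ))) *
              Complex.exp (-Complex.I * (θ : ℂ)))
          + (∫ φ in (-θ)..θ, f ((κ : ℂ) * Complex.exp (Complex.I * (φ : ℂ))) *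
              (Complex.I * (κ : ℂ) * Complex.exp (Complex.I * (φ : ℂ))))
          + ∫ ρ in Set.Ioi κ, f ((ρ : ℂ) * Complex.exp (Complex.I * (θ : ℂ))) *
              Complex.exp (Complex.I * (θ : ℂ)))
      ‖(lam : ℂ) ^ (m + 1) * F‖ ≤ c * t ^ (-((m : ℝ) + 1) * α) := by
  obtain ⟨hα0, hα1⟩ := hα
  obtain ⟨hθ1, hθ2⟩ := hθ
  have hπ := Real.pi_pos
  have hθπ : θ < Real.pi := lt_of_lt_of_le hθ2 (min_le_left _ _)
  have hθπα : θ < Real.pi / α := lt_of_lt_of_le hθ2 (min_le_right _ _)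
  have hθ0 : 0 < θ := lt_trans (by positivity) hθ1
  have hαθ : α * θ < Real.pi := by
    rw [lt_div_iff₀ hα0] at hθπα; linarith [hθπα]
  have hS : 0 < Real.sin (α*θ) := Real.sin_pos_of_pos_of_lt_pi (by positivity) hαθ
  have hcos : Real.cos θ < 0 :=
    Real.cos_neg_of_pi_div_two_lt_of_lt hθ1 (by linarith)
  set β : ℝ := (1 + (m:ℝ)) * α with hβdef
  have hβ : 0 < β := by positivity
  have hΓ : 0 < Real.Gamma β := Real.Gamma_pos_of_pos hβ
  set A : ℝ := (-Real.cos θ) ^ (-β) with hA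
  have hA0 : 0 < A := Real.rpow_pos_of_pos (by linarith) _
  refine ⟨(2*Real.pi)⁻¹ * (Real.sin (α*θ))⁻¹ *
      (2 * A * Real.Gamma β + 2*θ*Real.exp 1), ?_, ?_⟩
  · have h1 : 0 < 2 * A * Real.Gamma β + 2*θ*Real.exp 1 := by positivity
    positivity
  intro lam t hl ht
  intro κ f F
  have hκ1t : κ = 1/t := rfl
  have hκ : 0 < κ := by rw [hκ1t]; positivity
  have hκt : κ * t = 1 := by rw [hκ1t]; field_simp
  set a : ℝ := -Real.cos θ * t with hadef
  have ha : 0 < a := mul_pos (by linarith) ht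
  have hS' : 0 ≤ (Real.sin (α*θ))⁻¹ := by positivity
  -- the dominating function on rays
  have hgint : Integrable
      (fun ρ => (Real.sin (α*θ))⁻¹ * (Real.exp (-(a*ρ)) * ρ^(β-1)))
      (volume.restrict (Set.Ioi κ)) :=
    (ray_integrable β a κ hβ ha hκ).const_mul _
  have hginteg : ∫ ρ in Set.Ioi κ, (Real.sin (α*θ))⁻¹ * (Real.exp (-(a*ρ)) * ρ^(β-1))
      ≤ (Real.sin (α*θ))⁻¹ * (a^(-β) * Real.Gamma β) := by
    rw [MeasureTheory.integral_const_mul]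
    exact mul_le_mul_of_nonneg_left (ray_int_le β a κ hβ ha hκ) hS'
  have habs_lam : ‖(lam:ℂ)^(m+1)‖ = lam^(m+1) := by
    rw [norm_pow, Complex.norm_real, Real.norm_eq_abs, _root_.abs_of_pos hl]
  -- generic ray bound
  have hray : ∀ φ' : ℝ, |φ'| ≤ θ → φ' ∈ Set.Ioc (-Real.pi) Real.pi →
      Real.cos φ' = Real.cos θ →
      lam^(m+1) * ‖∫ ρ in Set.Ioi κ,
        f ((ρ:ℂ) * Complex.exp (Complex.I * (φ':ℂ))) * Complex.exp (Complex.I * (φ':ℂ))‖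
      ≤ (Real.sin (α*θ))⁻¹ * (a^(-β) * Real.Gamma β) := by
    intro φ' h1 h2 h3
    have heq : lam^(m+1) * ‖∫ ρ in Set.Ioi κ,
        f ((ρ:ℂ) * Complex.exp (Complex.I * (φ':ℂ))) * Complex.exp (Complex.I * (φ':ℂ))‖
        = ‖∫ ρ in Set.Ioi κ, (lam:ℂ)^(m+1) *
            (f ((ρ:ℂ) * Complex.exp (Complex.I * (φ':ℂ))) * Complex.exp (Complex.I * (φ':ℂ)))‖ := by
      rw [MeasureTheory.integral_const_mul, norm_mul, habs_lam]
    rw [heq]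
    refine le_trans (MeasureTheory.norm_integral_le_of_norm_le hgint ?_) hginteg
    filter_upwards [MeasureTheory.ae_restrict_mem measurableSet_Ioi] with ρ hρm
    have hρ0 : 0 < ρ := hκ.trans hρm
    rw [show ((lam:ℂ)^(m+1) *
        (f ((ρ:ℂ) * Complex.exp (Complex.I * (φ':ℂ))) * Complex.exp (Complex.I * (φ':ℂ))))
        = ((lam:ℂ)^(m+1) * f ((ρ:ℂ) * Complex.exp (Complex.I * (φ':ℂ)))) *
            Complex.exp (Complex.I * (φ':ℂ)) from by ring, norm_mul]
    have habse : ‖Complex.exp (Complex.I * (φ':ℂ))‖ = 1 := by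
      simp [Complex.norm_exp]
    rw [habse, mul_one]
    have := point_bound α θ m hα0 hθ0 hαθ lam t ρ φ' hl ht hρ0 h1 h2
    simp only [f]
    refine le_trans this (le_of_eq ?_)
    rw [h3]
    congr 2
    · congr 1; ring
  -- arc bound
  have harc : lam^(m+1) * ‖∫ φ' in (-θ)..θ,
        f ((κ:ℂ) * Complex.exp (Complex.I * (φ':ℂ))) *
          (Complex.I * (κ:ℂ) * Complex.exp (Complex.I * (φ':ℂ)))‖
      ≤ (Real.sin (α*θ))⁻¹ * (2*θ*Real.exp 1 * t^(-β)) := by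
    have hκβ : κ^(β-1) * κ = t^(-β) := by
      nth_rewrite 2 [show κ = κ^(1:ℝ) from (Real.rpow_one κ).symm]
      rw [← Real.rpow_add hκ, sub_add_cancel, hκ1t, one_div, Real.inv_rpow ht.le,
        ← Real.rpow_neg ht.le]
    have heq : lam^(m+1) * ‖∫ φ' in (-θ)..θ,
        f ((κ:ℂ) * Complex.exp (Complex.I * (φ':ℂ))) *
          (Complex.I * (κ:ℂ) * Complex.exp (Complex.I * (φ':ℂ)))‖
        = ‖∫ φ' in (-θ)..θ, (lam:ℂ)^(m+1) *
            (f ((κ:ℂ) * Complex.exp (Complex.I * (φ':ℂ))) *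
              (Complex.I * (κ:ℂ) * Complex.exp (Complex.I * (φ':ℂ))))‖ := by
      rw [intervalIntegral.integral_const_mul, norm_mul, habs_lam]
    rw [heq]
    have hbd := intervalIntegral.norm_integral_le_of_norm_le_const (a := -θ) (b := θ)
      (C := (Real.sin (α*θ))⁻¹ * (Real.exp 1 * κ^(β-1)) * κ) (f := fun φ' =>
        (lam:ℂ)^(m+1) * (f ((κ:ℂ) * Complex.exp (Complex.I * (φ':ℂ))) *
          (Complex.I * (κ:ℂ) * Complex.exp (Complex.I * (φ':ℂ))))) ?_
    · refine le_trans hbd (le_of_eq ?_)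
      rw [show θ - (-θ) = 2*θ by ring, _root_.abs_of_pos (by linarith : (0:ℝ) < 2*θ)]
      rw [← hκβ]; ring
    · intro φ' hφ'
      rw [Set.uIoc_of_le (by linarith : -θ ≤ θ)] at hφ'
      have h1 : |φ'| ≤ θ := abs_le.mpr ⟨hφ'.1.le, hφ'.2⟩
      have h2 : φ' ∈ Set.Ioc (-Real.pi) Real.pi :=
        ⟨by linarith [hφ'.1], by linarith [hφ'.2]⟩
      beta_reduce
      rw [show ((lam:ℂ)^(m+1) *
          (f ((κ:ℂ) * Complex.exp (Complex.I * (φ':ℂ))) *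
            (Complex.I * (κ:ℂ) * Complex.exp (Complex.I * (φ':ℂ)))))
          = ((lam:ℂ)^(m+1) * f ((κ:ℂ) * Complex.exp (Complex.I * (φ':ℂ)))) *
              (Complex.I * (κ:ℂ) * Complex.exp (Complex.I * (φ':ℂ))) from by ring, norm_mul]
      have habse : ‖Complex.I * (κ:ℂ) * Complex.exp (Complex.I * (φ':ℂ))‖ = κ := by
        simp [Complex.norm_exp, _root_.abs_of_pos hκ]
      rw [habse]
      have hpb := point_bound α θ m hα0 hθ0 hαθ lam t κ φ' hl ht hκ h1 h2
      simp only [f]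
      refine le_trans (mul_le_mul_of_nonneg_right hpb hκ.le) ?_
      have hexp : Real.exp (κ * Real.cos φ' * t) ≤ Real.exp 1 := by
        apply Real.exp_le_exp.mpr
        nlinarith [Real.cos_le_one φ', hκ, ht]
      have : Real.exp (κ * Real.cos φ' * t) * κ^((1+(m:ℝ))*α-1)
          ≤ Real.exp 1 * κ^(β-1) := by
        apply mul_le_mul_of_nonneg_right hexp (Real.rpow_nonneg hκ.le _)
      calc (Real.sin (α*θ))⁻¹ * (Real.exp (κ * Real.cos φ' * t) * κ^((1+(m:ℝ))*α-1)) * κ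
          ≤ (Real.sin (α*θ))⁻¹ * (Real.exp 1 * κ^(β-1)) * κ := by
            apply mul_le_mul_of_nonneg_right _ hκ.le
            exact mul_le_mul_of_nonneg_left this hS'
        _ = _ := rfl
  -- assemble
  have hrw : (-Complex.I * (θ:ℂ)) = Complex.I * ((-θ:ℝ):ℂ) := by push_cast; ring
  have hC0 : ‖(-1:ℂ)^m / (2*(Real.pi:ℂ)*Complex.I)‖ = (2*Real.pi)⁻¹ := by
    rw [norm_div, norm_pow, norm_mul, norm_mul]
    simp [Complex.norm_I, Complex.norm_real, Real.norm_eq_abs, _root_.abs_of_pos hπ, Complex.norm_two]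
  have hrayθ := hray θ (by rw [_root_.abs_of_pos hθ0]) ⟨by linarith, hθπ.le⟩ rfl
  have hraynθ := hray (-θ) (by rw [abs_neg, _root_.abs_of_pos hθ0])
    ⟨by linarith, by linarith⟩ (Real.cos_neg θ)
  simp only [F]
  rw [hrw]
  set I1 : ℂ := ∫ ρ in Set.Ioi κ,
      f ((ρ:ℂ) * Complex.exp (Complex.I * ((-θ:ℝ):ℂ))) * Complex.exp (Complex.I * ((-θ:ℝ):ℂ))
    with hI1
  set I2 : ℂ := ∫ φ' in (-θ)..θ, f ((κ:ℂ) * Complex.exp (Complex.I * (φ':ℂ))) *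
      (Complex.I * (κ:ℂ) * Complex.exp (Complex.I * (φ':ℂ))) with hI2
  set I3 : ℂ := ∫ ρ in Set.Ioi κ,
      f ((ρ:ℂ) * Complex.exp (Complex.I * (θ:ℂ))) * Complex.exp (Complex.I * (θ:ℂ)) with hI3
  have hGle : ‖-I1 + I2 + I3‖ ≤
      ‖I1‖ + ‖I2‖ + ‖I3‖ := by
    calc ‖-I1 + I2 + I3‖ ≤ ‖-I1 + I2‖ + ‖I3‖ :=
          norm_add_le _ _
      _ ≤ ‖-I1‖ + ‖I2‖ + ‖I3‖ := by
          exact add_le_add_left (norm_add_le (-I1) I2) _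
      _ = ‖I1‖ + ‖I2‖ + ‖I3‖ := by rw [norm_neg]
  have hmain : ‖(lam:ℂ)^(m+1) *
      ((-1:ℂ)^m / (2*(Real.pi:ℂ)*Complex.I) * (-I1 + I2 + I3))‖
      ≤ (2*Real.pi)⁻¹ * (lam^(m+1) * ‖I1‖ + lam^(m+1) * ‖I2‖
          + lam^(m+1) * ‖I3‖) := by
    rw [norm_mul, norm_mul, habs_lam, hC0]
    calc lam^(m+1) * ((2*Real.pi)⁻¹ * ‖-I1 + I2 + I3‖)
        ≤ lam^(m+1) * ((2*Real.pi)⁻¹ *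
            (‖I1‖ + ‖I2‖ + ‖I3‖)) := by
          apply mul_le_mul_of_nonneg_left _ (by positivity)
          exact mul_le_mul_of_nonneg_left hGle (by positivity)
      _ = (2*Real.pi)⁻¹ * (lam^(m+1) * ‖I1‖ + lam^(m+1) * ‖I2‖
          + lam^(m+1) * ‖I3‖) := by ring
  refine le_trans hmain ?_
  have hsum : lam^(m+1) * ‖I1‖ + lam^(m+1) * ‖I2‖
      + lam^(m+1) * ‖I3‖
      ≤ (Real.sin (α*θ))⁻¹ * (a^(-β) * Real.Gamma β)
        + (Real.sin (α*θ))⁻¹ * (2*θ*Real.exp 1 * t^(-β))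
        + (Real.sin (α*θ))⁻¹ * (a^(-β) * Real.Gamma β) :=
    add_le_add (add_le_add hraynθ harc) hrayθ
  refine le_trans (mul_le_mul_of_nonneg_left hsum (by positivity)) (le_of_eq ?_)
  have haβ : a^(-β) = A * t^(-β) := by
    rw [hadef, Real.mul_rpow (by linarith) ht.le, hA]
  have hexpeq : t ^ (-((m:ℝ)+1)*α) = t^(-β) := by
    congr 1
    rw [hβdef]; ring
  rw [haβ, hexpeq]
  ring
end
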